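/- Let 0 < q < 1 and let x be any real number. Then ∏_{s=0}^∞ (1 + q^s x) = Σ_{k=0}^∞ q^{k(k-1)/2} x^k / ((1-q)(1-q^2)⋯(1-q^k)); that is, the limit as n → ∞ of (1+x)_q^n equals the q-exponential series E_q(x). -/

import Mathlib

open Finset Filter Topology

/-- Auxiliary: `A q x n k = q^{k(k-1)/2} x^k ∏_{i<k}(1-q^{n-i}) / ∏_{i<k}(1-q^{i+1})`. -/
noncomputable def qPochA (q x : ℝ) (n k : ℕ) : ℝ :=
  q ^ (k * (k - 1) / 2) * x ^ k * (∏ i ∈ Finset.range k, (1 - q ^ (n - i))) /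
    ∏ i ∈ Finset.range k, (1 - q ^ (i + 1))

lemma qPochA_zero (q x : ℝ) (n : ℕ) : qPochA q x n 0 = 1 := by
  simp [qPochA]

lemma qPochA_eq_zero_of_lt (q x : ℝ) {n k : ℕ} (h : n < k) : qPochA q x n k = 0 := by
  unfold qPochA
  rw [Finset.prod_eq_zero (Finset.mem_range.2 h) (by simp)]
  simp

lemma qPochA_step (q x : ℝ) (hq : q ≠ 0) (hq0 : 0 ≤ q) (hq1 : q < 1) {n m : ℕ} (hm : m ≤ n) :
    qPochA q x (n + 1) (m + 1) = qPochA q x n (m + 1) + q ^ n * x * qPochA q x n m := by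
  have hDm : (∏ i ∈ Finset.range m, (1 - q ^ (i + 1))) ≠ 0 := by
    apply Finset.prod_ne_zero_iff.2
    intro i _
    have : q ^ (i + 1) < 1 := pow_lt_one₀ hq0 hq1 (Nat.succ_ne_zero i)
    linarith
  have hDm1 : (1 - q ^ (m + 1)) ≠ 0 := by
    have : q ^ (m + 1) < 1 := pow_lt_one₀ hq0 hq1 (Nat.succ_ne_zero m)
    linarith
  have h1 : q ^ m * q ^ (n - m) = q ^ n := by
    rw [← pow_add, Nat.add_sub_cancel' hm]
  have hT : (m + 1) * (m + 1 - 1) / 2 = m * (m - 1) / 2 + m := Nat.triangle_succ m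
  unfold qPochA
  rw [hT]
  rw [Finset.prod_range_succ' (fun i => (1 - q ^ (n + 1 - i))) m]
  rw [Finset.prod_range_succ (fun i => (1 - q ^ (n - i))) m]
  rw [Finset.prod_range_succ (fun i => (1 - q ^ (i + 1))) m]
  have hshift : ∀ i ∈ Finset.range m, (1 - q ^ (n + 1 - (i + 1))) = (1 - q ^ (n - i)) := by
    intro i _
    congr 2
    omega
  rw [Finset.prod_congr rfl hshift]
  have hn1 : (n + 1 - 0) = n + 1 := rfl
  rw [hn1]
  set P := ∏ i ∈ Finset.range m, (1 - q ^ (n - i)) with hP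
  set D := ∏ i ∈ Finset.range m, (1 - q ^ (i + 1)) with hD
  field_simp
  linear_combination (q ^ (m*(m-1)/2) * x ^ (m + 1) * P) * h1

lemma qPoch_prod_eq (q x : ℝ) (hq0 : 0 < q) (hq1 : q < 1) (n : ℕ) :
    ∏ s ∈ Finset.range n, (1 + q ^ s * x) = ∑ k ∈ Finset.range (n + 1), qPochA q x n k := by
  induction n with
  | zero => simp [qPochA_zero]
  | succ n ih =>
    rw [Finset.prod_range_succ, ih]
    rw [Finset.sum_range_succ' (fun k => qPochA q x (n+1) k) (n+1)]
    have hstep : ∀ k ∈ Finset.range (n + 1),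
        qPochA q x (n + 1) (k + 1) = qPochA q x n (k + 1) + q ^ n * x * qPochA q x n k := by
      intro k hk
      exact qPochA_step q x hq0.ne' hq0.le hq1 (Nat.lt_succ_iff.mp (Finset.mem_range.mp hk))
    rw [Finset.sum_congr rfl hstep, Finset.sum_add_distrib, ← Finset.mul_sum,
      qPochA_zero]
    have hsum : ∑ k ∈ Finset.range (n + 1), qPochA q x n (k + 1)
        = (∑ k ∈ Finset.range (n + 1), qPochA q x n k) - 1 := by
      rw [Finset.sum_range_succ (fun k => qPochA q x n (k+1)) n,
        qPochA_eq_zero_of_lt q x (Nat.lt_succ_self n)]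
      have h2 := Finset.sum_range_succ' (fun k => qPochA q x n k) n
      rw [qPochA_zero] at h2
      simp only [add_zero]
      linarith [h2]
    rw [hsum]
    ring

/-- Limit of `(1+x)_q^n = ∏_{s=0}^{n-1}(1 + q^s x)` as `n → ∞` is the
q-exponential series `E_q(x) = Σ_{k=0}^∞ q^{k(k-1)/2} x^k / ((1-q)(1-q^2)⋯(1-q^k))`. -/
theorem tendsto_qPochPlus_eq_qExpE (q : ℝ) (hq0 : 0 < q) (hq1 : q < 1) (x : ℝ) :
    Tendsto (fun n : ℕ => ∏ s ∈ Finset.range n, (1 + q ^ s * x)) atTop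
      (𝓝 (∑' k : ℕ,
        q ^ (k * (k - 1) / 2) * x ^ k / ∏ i ∈ Finset.range k, (1 - q ^ (i + 1)))) := by
  set L : ℕ → ℝ := fun k => q ^ (k * (k - 1) / 2) * x ^ k / ∏ i ∈ Finset.range k, (1 - q ^ (i + 1)) with hL
  have hDpos : ∀ k : ℕ, 0 < ∏ i ∈ Finset.range k, (1 - q ^ (i + 1)) := by
    intro k
    apply Finset.prod_pos
    intro i _
    have : q ^ (i + 1) < 1 := pow_lt_one₀ hq0.le hq1 (Nat.succ_ne_zero i)
    linarith
  set bound : ℕ → ℝ := fun k => q ^ (k * (k - 1) / 2) * |x| ^ k / ∏ i ∈ Finset.range k, (1 - q ^ (i + 1)) with hb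
  have hbnonneg : ∀ k, 0 ≤ bound k := by
    intro k
    apply div_nonneg (by positivity) (hDpos k).le
  have hbound_summable : Summable bound := by
    apply summable_of_ratio_norm_eventually_le (r := 1/2) (by norm_num)
    have h0 : Tendsto (fun k : ℕ => q ^ k * |x|) atTop (𝓝 0) := by
      simpa using (tendsto_pow_atTop_nhds_zero_of_lt_one hq0.le hq1).mul_const |x|
    have hev : ∀ᶠ k : ℕ in atTop, q ^ k * |x| ≤ (1 - q)/2 := by
      have hlt : (0:ℝ) < (1 - q)/2 := by linarith
      filter_upwards [h0.eventually (gt_mem_nhds hlt)] with k hk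
      exact hk.le
    filter_upwards [hev] with k hk
    have hq1k : q ^ (k + 1) < 1 := pow_lt_one₀ hq0.le hq1 (Nat.succ_ne_zero k)
    have hT : (k + 1) * (k + 1 - 1) / 2 = k * (k - 1) / 2 + k := Nat.triangle_succ k
    have hden : (0:ℝ) < 1 - q ^ (k + 1) := by linarith
    have hbk1 : bound (k + 1) = bound k * (q ^ k * |x| / (1 - q ^ (k + 1))) := by
      simp only [hb, hT, Finset.prod_range_succ, pow_add, pow_succ]
      field_simp
      ring
    rw [Real.norm_eq_abs, Real.norm_eq_abs, abs_of_nonneg (hbnonneg _), abs_of_nonneg (hbnonneg _), hbk1]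
    have hqk : q ^ (k + 1) ≤ q := by
      calc q ^ (k + 1) ≤ q ^ 1 :=
        pow_le_pow_of_le_one hq0.le hq1.le (Nat.one_le_iff_ne_zero.2 (Nat.succ_ne_zero k))
      _ = q := pow_one q
    have hratio : q ^ k * |x| / (1 - q ^ (k + 1)) ≤ 1/2 := by
      rw [div_le_iff₀ hden]
      calc q ^ k * |x| ≤ (1 - q)/2 := hk
      _ ≤ 1/2 * (1 - q ^ (k + 1)) := by linarith
    calc bound k * (q ^ k * |x| / (1 - q ^ (k + 1)))
        ≤ bound k * (1/2) := mul_le_mul_of_nonneg_left hratio (hbnonneg k)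
      _ = 1/2 * bound k := by ring
  have hpt : ∀ k : ℕ, Tendsto (fun n => qPochA q x n k) atTop (𝓝 (L k)) := by
    intro k
    have hN : Tendsto (fun n : ℕ => ∏ i ∈ Finset.range k, (1 - q ^ (n - i))) atTop (𝓝 1) := by
      have h := tendsto_finset_prod (Finset.range k)
        (f := fun (i : ℕ) (n : ℕ) => (1 - q ^ (n - i))) (x := atTop) (a := fun _ => (1:ℝ)) ?_
      · simpa using h
      · intro i _
        have h1 : Tendsto (fun n : ℕ => q ^ (n - i)) atTop (𝓝 0) :=
          (tendsto_pow_atTop_nhds_zero_of_lt_one hq0.le hq1).comp (tendsto_sub_atTop_nat i)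
        simpa using (tendsto_const_nhds (x := (1:ℝ))).sub h1
    have h2 : Tendsto (fun n => q ^ (k * (k - 1) / 2) * x ^ k *
        (∏ i ∈ Finset.range k, (1 - q ^ (n - i))) / ∏ i ∈ Finset.range k, (1 - q ^ (i + 1)))
        atTop (𝓝 (q ^ (k * (k - 1) / 2) * x ^ k * 1 / ∏ i ∈ Finset.range k, (1 - q ^ (i + 1)))) :=
      ((tendsto_const_nhds).mul hN).div_const _
    simpa [qPochA, hL, mul_one] using h2
  have hdom : ∀ᶠ n in atTop, ∀ k, ‖qPochA q x n k‖ ≤ bound k := by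
    apply Eventually.of_forall
    intro n k
    rw [Real.norm_eq_abs]
    unfold qPochA
    rw [abs_div, abs_of_pos (hDpos k)]
    rw [abs_mul, abs_mul, abs_pow, abs_pow, abs_of_pos hq0]
    show _ ≤ q ^ (k * (k - 1) / 2) * |x| ^ k / ∏ i ∈ Finset.range k, (1 - q ^ (i + 1))
    gcongr ?_ / _
    · exact (hDpos k).le
    have hNle : |∏ i ∈ Finset.range k, (1 - q ^ (n - i))| ≤ 1 := by
      rw [Finset.abs_prod]
      apply Finset.prod_le_one
      · intro i _
        exact abs_nonneg _
      · intro i _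
        rw [abs_le]
        constructor
        · have : q ^ (n - i) ≤ 1 := pow_le_one₀ hq0.le hq1.le
          linarith
        · have : 0 < q ^ (n - i) := pow_pos hq0 _
          linarith
    calc q ^ (k * (k - 1) / 2) * |x| ^ k * |∏ i ∈ Finset.range k, (1 - q ^ (n - i))|
        ≤ q ^ (k * (k - 1) / 2) * |x| ^ k * 1 :=
          mul_le_mul_of_nonneg_left hNle (by positivity)
      _ = q ^ (k * (k - 1) / 2) * |x| ^ k := mul_one _
  have hmain := tendsto_tsum_of_dominated_convergence hbound_summable hpt hdom
  have heq : (fun n : ℕ => ∑' k, qPochA q x n k)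
      = fun n : ℕ => ∏ s ∈ Finset.range n, (1 + q ^ s * x) := by
    funext n
    rw [tsum_eq_sum (s := Finset.range (n + 1)) (fun k hk => qPochA_eq_zero_of_lt q x (by
      simp only [Finset.mem_range, not_lt] at hk; omega))]
    exact (qPoch_prod_eq q x hq0 hq1 n).symm
  rw [heq] at hmain
  exact hmain
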